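/- arXiv:0911.5547 — 5 statements merged into one kernel-verified Lean document; each statement's English description precedes it below -/
import Mathlib

section
/- (Granville–Soundararajan identity.) Let b and r be integers with gcd(b, r) = 1, b ≠ 0 and r ≥ 1. Then for every completely multiplicative f : ℕ → ℂ with |f(n)| ≤ 1 for all n, every N ≥ 2, and every y ≥ 2: ∑_{n ≤ N, n ∈ 𝒮(y)} (f(n)/n)·e((b/r)·n) = ∑_{d | r, d ∈ 𝒮(y)} (f(d)/d)·(1/φ(r/d))·∑_{ψ mod r/d} τ(ψ)·conj(ψ)(b)·(∑_{n ≤ N/d, n ∈ 𝒮(y)} f(n)·conj(ψ)(n)/n), where the middle sum is over all Dirichlet characters ψ modulo r/d. -/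
open Complex Finset
open scoped Classical

noncomputable section

/-- `e(x) = exp(2πix)`. -/
def eC (x : ℝ) : ℂ := Complex.exp (2 * Real.pi * Complex.I * x)

/-- `n` is `y`-smooth: every prime factor of `n` is at most `y`. -/
def YSmooth (y : ℝ) (n : ℕ) : Prop := ∀ p : ℕ, p.Prime → p ∣ n → (p : ℝ) ≤ y

/-- `𝔻(f,g;X)² = ∑_{p ≤ X prime} (1 - Re (f p * conj (g p)))/p`. -/
def Dsq (f g : ℕ → ℂ) (X : ℝ) : ℝ :=
  ∑ p ∈ (Finset.range (⌊X⌋₊ + 1)).filter Nat.Prime,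
    (1 - (f p * (starRingEnd ℂ) (g p)).re) / p

/-- `𝕄(f; X, T) = min_{|t| ≤ T} 𝔻(f(n), n^{it}; X)²`. -/
def Mm (f : ℕ → ℂ) (X T : ℝ) : ℝ :=
  sInf ((fun t : ℝ => Dsq f (fun n => (n : ℂ) ^ (Complex.I * (t : ℂ))) X) '' Set.Icc (-T) T)

/-- The twist `n ↦ f(n) · conj(ψ(n))` of `f` by the conjugate of a Dirichlet character. -/
def twist {m : ℕ} (f : ℕ → ℂ) (ψ : DirichletCharacter ℂ m) : ℕ → ℂ :=
  fun n => f n * (starRingEnd ℂ) (ψ (n : ZMod m))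

/-- `∑_{n ≤ x, n ∈ 𝒮(y)} (f(n)/n) e(nα)`. -/
def smoothExpSum (f : ℕ → ℂ) (x y α : ℝ) : ℂ :=
  ∑ n ∈ (Finset.Icc 1 ⌊x⌋₊).filter (fun n => YSmooth y n), f n / n * eC (n * α)

/-- `f` is completely multiplicative with values in the closed complex unit disc. -/
def CMUnit (f : ℕ → ℂ) : Prop :=
  f 1 = 1 ∧ (∀ a b : ℕ, f (a * b) = f a * f b) ∧ ∀ n : ℕ, ‖f n‖ ≤ 1

/-- `δ_g = 1 - (g/π)·sin(π/g)`. -/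
def deltaOrd (g : ℕ) : ℝ := 1 - ((g : ℝ) / Real.pi) * Real.sin (Real.pi / g)

end

/-- The Gauss sum `τ(ψ) = ∑_{n ≤ q} ψ(n) e(n/q)`. -/
noncomputable def gaussSum' {q : ℕ} (ψ : DirichletCharacter ℂ q) : ℂ :=
  ∑ n ∈ Finset.Icc 1 q, ψ (n : ZMod q) * eC ((n : ℝ) / q)

lemma eC_add_int (x : ℝ) (t : ℤ) : eC (x + t) = eC x := by
  unfold eC
  push_cast
  rw [mul_add, Complex.exp_add]
  have h : Complex.exp (2 * Real.pi * Complex.I * t) = 1 := by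
    rw [show (2 * (Real.pi:ℂ) * Complex.I * t) = (t : ℤ) * (2 * Real.pi * Complex.I) by push_cast; ring]
    exact Complex.exp_int_mul_two_pi_mul_I t
  rw [h, mul_one]

lemma conj_char_eq_inv {q : ℕ} [NeZero q] (ψ : DirichletCharacter ℂ q) {z : ZMod q}
    (hz : IsUnit z) : (starRingEnd ℂ) (ψ z) = ψ z⁻¹ := by
  have h1 : ψ z⁻¹ * ψ z = 1 := by
    rw [← map_mul, ZMod.inv_mul_of_unit z hz, map_one]
  have hpow : (ψ z) ^ (orderOf hz.unit) = 1 := by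
    rw [← map_pow]
    have hz1 : z ^ orderOf hz.unit = 1 := by
      have h2 := pow_orderOf_eq_one hz.unit
      calc z ^ orderOf hz.unit = ((hz.unit ^ orderOf hz.unit : (ZMod q)ˣ) : ZMod q) := by
            rw [Units.val_pow_eq_pow_val, IsUnit.unit_spec]
        _ = 1 := by rw [h2]; rfl
    rw [hz1, map_one]
  have hnorm : ‖ψ z‖ = 1 :=
    Complex.norm_eq_one_of_pow_eq_one hpow (orderOf_pos hz.unit).ne'
  rw [← Complex.inv_eq_conj hnorm]
  exact (eq_inv_of_mul_eq_one_left h1).symm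

lemma sumGauss {q : ℕ} [NeZero q] (z : ZMod q) :
    ∑ ψ : DirichletCharacter ℂ q, gaussSum' ψ * (starRingEnd ℂ) (ψ z) =
      if IsUnit z then (q.totient : ℂ) * eC ((z.val : ℝ) / q) else 0 := by
  by_cases hz : IsUnit z
  · simp only [hz, if_true]
    have step1 : ∀ ψ : DirichletCharacter ℂ q,
        gaussSum' ψ * (starRingEnd ℂ) (ψ z) =
          ∑ k ∈ Finset.Icc 1 q, eC ((k : ℝ) / q) * (ψ z⁻¹ * ψ ((k : ℕ) : ZMod q)) := by
      intro ψ
      rw [conj_char_eq_inv ψ hz, gaussSum', Finset.sum_mul]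
      exact Finset.sum_congr rfl fun k _ => by ring
    rw [Finset.sum_congr rfl fun ψ _ => step1 ψ, Finset.sum_comm]
    have step2 : ∀ k ∈ Finset.Icc 1 q,
        (∑ ψ : DirichletCharacter ℂ q, eC ((k : ℝ) / q) * (ψ z⁻¹ * ψ ((k : ℕ) : ZMod q))) =
          if z = ((k : ℕ) : ZMod q) then eC ((k : ℝ) / q) * (q.totient : ℂ) else 0 := by
      intro k _
      rw [← Finset.mul_sum, DirichletCharacter.sum_char_inv_mul_char_eq ℂ hz]
      split_ifs <;> simp
    rw [Finset.sum_congr rfl step2]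
    -- the unique k
    have hq : 1 ≤ q := Nat.one_le_iff_ne_zero.mpr (NeZero.ne q)
    set k0 : ℕ := if z.val = 0 then q else z.val with hk0
    have hk0mem : k0 ∈ Finset.Icc 1 q := by
      rw [Finset.mem_Icc, hk0]
      split_ifs with h
      · exact ⟨hq, le_refl q⟩
      · exact ⟨Nat.one_le_iff_ne_zero.mpr h, (ZMod.val_lt z).le⟩
    have hcast : ((k0 : ℕ) : ZMod q) = z := by
      rw [hk0]
      split_ifs with h
      · rw [ZMod.natCast_self]
        have := ZMod.natCast_rightInverse (n := q) z
        rw [← this, h, Nat.cast_zero]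
      · exact ZMod.natCast_rightInverse z
    rw [Finset.sum_eq_single_of_mem k0 hk0mem]
    · rw [if_pos hcast.symm]
      have : eC ((k0 : ℝ) / q) = eC ((z.val : ℝ) / q) := by
        rw [hk0]
        split_ifs with h
        · rw [h]
          have h1 : ((q:ℝ)) / q = 0 + (1 : ℤ) := by
            rw [div_self (by exact_mod_cast NeZero.ne q)]; norm_num
          rw [h1, eC_add_int]
          norm_num
        · rfl
      rw [this]; ring
    · intro k hk hne
      rw [if_neg]
      intro heq
      apply hne
      have hval : z.val = k % q := by rw [heq, ZMod.val_natCast]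
      rw [Finset.mem_Icc] at hk
      rcases eq_or_lt_of_le hk.2 with h | h
      · have : z.val = 0 := by rw [hval, h, Nat.mod_self]
        rw [hk0, if_pos this, h]
      · have : z.val = k := by rw [hval, Nat.mod_eq_of_lt h]
        rw [hk0, if_neg (by omega), this]
  · simp only [hz, if_false]
    apply Finset.sum_eq_zero
    intro ψ _
    rw [ψ.map_nonunit hz, map_zero, mul_zero]

lemma eC_val_div {q : ℕ} [NeZero q] (w : ℤ) :
    eC ((((w : ZMod q)).val : ℝ) / q) = eC ((w : ℝ) / q) := by
  have h0 : (((((w : ZMod q)).val : ℤ) - w : ℤ) : ZMod q) = 0 := by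
    push_cast
    rw [ZMod.natCast_rightInverse (w : ZMod q)]
    ring
  rw [ZMod.intCast_zmod_eq_zero_iff_dvd] at h0
  obtain ⟨t, ht⟩ := h0
  have hq : (q : ℝ) ≠ 0 := Nat.cast_ne_zero.mpr (NeZero.ne q)
  have heq : ((w : ZMod q).val : ℝ) / q = (w : ℝ) / q + t := by
    have h2 := congrArg (Int.cast : ℤ → ℝ) ht
    push_cast at h2
    have h3 : ((w : ZMod q).val : ℝ) = (w : ℝ) + q * t := by linarith
    rw [h3, add_div, mul_comm, mul_div_assoc, div_self hq, mul_one]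
  rw [heq, eC_add_int]

lemma ysmooth_of_dvd {y : ℝ} {m n : ℕ} (h : m ∣ n) (hs : YSmooth y n) : YSmooth y m :=
  fun p pp pd => hs p pp (pd.trans h)

lemma ysmooth_mul {y : ℝ} {a b : ℕ} (ha : YSmooth y a) (hb : YSmooth y b) :
    YSmooth y (a * b) := fun p pp pd => ((Nat.Prime.dvd_mul pp).mp pd).elim (ha p pp) (hb p pp)

set_option maxHeartbeats 1000000 in
/-- **Proposition 2.3** (Granville–Soundararajan identity). -/
theorem statement7 (b : ℤ) (r : ℕ) (hb : b ≠ 0) (hr : 1 ≤ r) (hgcd : Int.gcd b r = 1)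
    (f : ℕ → ℂ) (hf : CMUnit f) (N y : ℝ) (hN : 2 ≤ N) (hy : 2 ≤ y) :
    (∑ n ∈ (Finset.Icc 1 ⌊N⌋₊).filter (fun n => YSmooth y n),
        f n / n * eC ((b : ℝ) / r * n)) =
      ∑ d ∈ r.divisors.filter (fun d => YSmooth y d),
        f d / d * (1 / (Nat.totient (r / d) : ℂ)) *
          ∑ ψ : DirichletCharacter ℂ (r / d),
            gaussSum' ψ * (starRingEnd ℂ) (ψ (b : ZMod (r / d))) *
              ∑ n ∈ (Finset.Icc 1 ⌊N / d⌋₊).filter (fun n => YSmooth y n),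
                f n * (starRingEnd ℂ) (ψ (n : ZMod (r / d))) / n := by
  obtain ⟨hf1, hfmul, -⟩ := hf
  have hr0 : r ≠ 0 := by omega
  set G : ℕ → ℂ := fun n => f n / n * eC ((b : ℝ) / r * n) with hG
  set M : ℕ → Finset ℕ := fun d => (Finset.Icc 1 ⌊N / d⌋₊).filter (fun n => YSmooth y n) with hM
  set D : Finset ℕ := r.divisors.filter (fun d => YSmooth y d) with hD
  set A : Finset ℕ := (Finset.Icc 1 ⌊N⌋₊).filter (fun n => YSmooth y n) with hA
  have step1 : ∀ d ∈ D,
      f d / d * (1 / (Nat.totient (r / d) : ℂ)) *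
        ∑ ψ : DirichletCharacter ℂ (r / d),
          gaussSum' ψ * (starRingEnd ℂ) (ψ (b : ZMod (r / d))) *
            ∑ n ∈ M d, f n * (starRingEnd ℂ) (ψ (n : ZMod (r / d))) / n
      = ∑ m ∈ M d, (if IsUnit ((m : ℕ) : ZMod (r / d)) then G (d * m) else 0) := by
    intro d hd
    rw [hD, Finset.mem_filter, Nat.mem_divisors] at hd
    obtain ⟨⟨hdvd, -⟩, -⟩ := hd
    have hd0 : 0 < d := Nat.pos_of_dvd_of_pos hdvd (by omega)
    have hq0 : 0 < r / d := Nat.div_pos (Nat.le_of_dvd (by omega) hdvd) hd0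
    haveI : NeZero (r / d) := ⟨hq0.ne'⟩
    have hdq : d * (r / d) = r := Nat.mul_div_cancel' hdvd
    have hφ0 : ((r / d).totient : ℂ) ≠ 0 :=
      Nat.cast_ne_zero.mpr (Nat.totient_pos.mpr hq0).ne'
    have hbu : IsUnit ((b : ℤ) : ZMod (r / d)) := by
      have h1 : IsCoprime (b : ℤ) (r : ℤ) := Int.isCoprime_iff_gcd_eq_one.mpr hgcd
      obtain ⟨u, v, huv⟩ := h1
      have hrz : ((r : ℕ) : ZMod (r / d)) = 0 := by
        exact (ZMod.natCast_eq_zero_iff r (r / d)).mpr (Nat.div_dvd_of_dvd hdvd)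
      have h2 : ((u : ℤ) : ZMod (r / d)) * ((b : ℤ) : ZMod (r / d)) = 1 := by
        have h3 := congrArg (fun z : ℤ => (z : ZMod (r / d))) huv
        push_cast [hrz] at h3
        simpa using h3
      exact IsUnit.of_mul_eq_one _ (by rw [mul_comm]; exact h2)
    have key : ∀ m ∈ M d,
        f d / d * (1 / ((r / d).totient : ℂ)) *
          ∑ ψ : DirichletCharacter ℂ (r / d),
            gaussSum' ψ * (starRingEnd ℂ) (ψ (b : ZMod (r / d))) *
              (f m * (starRingEnd ℂ) (ψ ((m : ℕ) : ZMod (r / d))) / m)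
        = if IsUnit ((m : ℕ) : ZMod (r / d)) then G (d * m) else 0 := by
      intro m hm
      rw [hM] at hm
      simp only [Finset.mem_filter, Finset.mem_Icc] at hm
      obtain ⟨⟨hm1, hmU⟩, hms⟩ := hm
      set w : ZMod (r / d) := ((b * m : ℤ) : ZMod (r / d)) with hw
      have hwm : ∀ ψ : DirichletCharacter ℂ (r / d),
          gaussSum' ψ * (starRingEnd ℂ) (ψ (b : ZMod (r / d))) *
            (f m * (starRingEnd ℂ) (ψ ((m : ℕ) : ZMod (r / d))) / m)
          = f m / m * (gaussSum' ψ * (starRingEnd ℂ) (ψ w)) := by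
        intro ψ
        have hsplit : ψ w = ψ ((b : ℤ) : ZMod (r / d)) * ψ ((m : ℕ) : ZMod (r / d)) := by
          rw [← map_mul]; congr 1; rw [hw]; push_cast; ring
        rw [hsplit, map_mul]; ring
      rw [Finset.sum_congr rfl fun ψ _ => hwm ψ, ← Finset.mul_sum, sumGauss w]
      have hunit : IsUnit w ↔ IsUnit ((m : ℕ) : ZMod (r / d)) := by
        have hw2 : w = (hbu.unit : ZMod (r / d)) * ((m : ℕ) : ZMod (r / d)) := by
          rw [IsUnit.unit_spec, hw]; push_cast; ring
        rw [hw2]; exact Units.isUnit_units_mul hbu.unit _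
      by_cases hu : IsUnit ((m : ℕ) : ZMod (r / d))
      · rw [if_pos (hunit.mpr hu), if_pos hu]
        have heC : eC ((w.val : ℝ) / (r / d : ℕ)) = eC ((b : ℝ) / r * ((d * m : ℕ) : ℝ)) := by
          rw [hw, eC_val_div]
          congr 1
          have hd0' : ((d : ℕ) : ℝ) ≠ 0 := Nat.cast_ne_zero.mpr hd0.ne'
          have hq0' : (((r / d : ℕ)) : ℝ) ≠ 0 := Nat.cast_ne_zero.mpr hq0.ne'
          rw [← hdq]
          push_cast
          field_simp
          rw [Nat.mul_div_cancel_left _ hd0]; exact mul_inv_cancel₀ hq0'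
        rw [heC, hG]
        have hfd : f (d * m) = f d * f m := hfmul d m
        have hd0' : ((d : ℕ) : ℂ) ≠ 0 := Nat.cast_ne_zero.mpr hd0.ne'
        have hm0' : ((m : ℕ) : ℂ) ≠ 0 := Nat.cast_ne_zero.mpr (by omega)
        simp only [hfd]
        push_cast
        field_simp
      · rw [if_neg (fun h => hu (hunit.mp h)), if_neg hu]
        simp
    have swap : (∑ ψ : DirichletCharacter ℂ (r / d),
        gaussSum' ψ * (starRingEnd ℂ) (ψ (b : ZMod (r / d))) *
          ∑ n ∈ M d, f n * (starRingEnd ℂ) (ψ ((n : ℕ) : ZMod (r / d))) / n)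
        = ∑ m ∈ M d, ∑ ψ : DirichletCharacter ℂ (r / d),
            gaussSum' ψ * (starRingEnd ℂ) (ψ (b : ZMod (r / d))) *
              (f m * (starRingEnd ℂ) (ψ ((m : ℕ) : ZMod (r / d))) / m) := by
      rw [Finset.sum_congr rfl fun ψ _ => Finset.mul_sum _ _ _, Finset.sum_comm]
    rw [swap, Finset.mul_sum]
    refine Finset.sum_congr rfl fun m hm => (key m hm).trans ?_
    congr 1
  have main : (∑ d ∈ D, ∑ m ∈ M d,
      (if IsUnit ((m : ℕ) : ZMod (r / d)) then G (d * m) else 0)) = ∑ n ∈ A, G n := by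
    rw [Finset.sum_sigma' D M (fun d m => if IsUnit ((m : ℕ) : ZMod (r / d)) then G (d * m) else 0)]
    rw [← Finset.sum_filter]
    refine Finset.sum_nbij' (fun p => p.1 * p.2)
      (fun n => (⟨Nat.gcd n r, n / Nat.gcd n r⟩ : Σ _ : ℕ, ℕ)) ?_ ?_ ?_ ?_ ?_
    · rintro ⟨d, m⟩ hp
      rw [Finset.mem_filter, Finset.mem_sigma] at hp
      obtain ⟨⟨hdD, hmM⟩, -⟩ := hp
      rw [hD, Finset.mem_filter, Nat.mem_divisors] at hdD
      obtain ⟨⟨hdvd, -⟩, hds⟩ := hdD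
      rw [hM, Finset.mem_filter, Finset.mem_Icc] at hmM
      obtain ⟨⟨hm1, hmU⟩, hms⟩ := hmM
      have hd0 : 0 < d := Nat.pos_of_dvd_of_pos hdvd (by omega)
      have hmr : (m : ℝ) ≤ N / d := by
        refine le_trans (Nat.cast_le.mpr hmU) (Nat.floor_le ?_)
        positivity
      have hdm : ((d * m : ℕ) : ℝ) ≤ N := by
        push_cast
        calc (d : ℝ) * m ≤ d * (N / d) := by
              exact mul_le_mul_of_nonneg_left hmr (by positivity)
          _ = N := by field_simp
      rw [hA, Finset.mem_filter, Finset.mem_Icc]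
      exact ⟨⟨Nat.one_le_iff_ne_zero.mpr (Nat.mul_pos hd0 hm1).ne', Nat.le_floor hdm⟩, ysmooth_mul hds hms⟩
    · intro n hn
      rw [hA, Finset.mem_filter, Finset.mem_Icc] at hn
      obtain ⟨⟨hn1, hnU⟩, hns⟩ := hn
      have hn0 : 0 < n := hn1
      have hg0 : 0 < Nat.gcd n r := Nat.gcd_pos_of_pos_left r hn0
      have hgn : Nat.gcd n r ∣ n := Nat.gcd_dvd_left n r
      rw [Finset.mem_filter, Finset.mem_sigma]
      refine ⟨⟨?_, ?_⟩, ?_⟩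
      · rw [hD, Finset.mem_filter, Nat.mem_divisors]
        exact ⟨⟨Nat.gcd_dvd_right n r, hr0⟩, ysmooth_of_dvd (Nat.gcd_dvd_left n r) hns⟩
      · rw [hM, Finset.mem_filter, Finset.mem_Icc]
        refine ⟨⟨Nat.div_pos (Nat.le_of_dvd hn0 hgn) hg0, Nat.le_floor ?_⟩,
          ysmooth_of_dvd (Nat.div_dvd_of_dvd hgn) hns⟩
        rw [le_div_iff₀ (by exact_mod_cast hg0)]
        have h1 : ((n / Nat.gcd n r : ℕ) : ℝ) * (Nat.gcd n r : ℝ) = (n : ℝ) := by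
          rw [← Nat.cast_mul, Nat.div_mul_cancel hgn]
        rw [h1]
        exact le_trans (Nat.cast_le.mpr hnU) (Nat.floor_le (by linarith))
      · exact (ZMod.isUnit_iff_coprime _ _).mpr (Nat.coprime_div_gcd_div_gcd hg0)
    · rintro ⟨d, m⟩ hp
      rw [Finset.mem_filter, Finset.mem_sigma] at hp
      obtain ⟨⟨hdD, hmM⟩, hP⟩ := hp
      rw [hD, Finset.mem_filter, Nat.mem_divisors] at hdD
      obtain ⟨⟨hdvd, -⟩, -⟩ := hdD
      have hd0 : 0 < d := Nat.pos_of_dvd_of_pos hdvd (by omega)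
      have hco : Nat.Coprime m (r / d) := (ZMod.isUnit_iff_coprime _ _).mp hP
      have hgcd_eq : Nat.gcd (d * m) r = d := by
        conv_lhs => rw [← Nat.mul_div_cancel' hdvd]
        rw [Nat.gcd_mul_left, hco.gcd_eq_one, mul_one]
      show (⟨Nat.gcd (d * m) r, (d * m) / Nat.gcd (d * m) r⟩ : Σ _ : ℕ, ℕ) = ⟨d, m⟩
      rw [hgcd_eq, Nat.mul_div_cancel_left m hd0]
    · intro n hn
      show Nat.gcd n r * (n / Nat.gcd n r) = n
      exact Nat.mul_div_cancel' (Nat.gcd_dvd_left n r)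
    · rintro ⟨d, m⟩ _
      rfl
  calc (∑ n ∈ A, G n)
      = ∑ d ∈ D, ∑ m ∈ M d, (if IsUnit ((m : ℕ) : ZMod (r / d)) then G (d * m) else 0) :=
        main.symm
    _ = ∑ d ∈ D, f d / d * (1 / (Nat.totient (r / d) : ℂ)) *
          ∑ ψ : DirichletCharacter ℂ (r / d),
            gaussSum' ψ * (starRingEnd ℂ) (ψ (b : ZMod (r / d))) *
              ∑ n ∈ M d, f n * (starRingEnd ℂ) (ψ (n : ZMod (r / d))) / n :=
        (Finset.sum_congr rfl step1).symm
end

section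
/- Let g ≥ 3 be odd, k ≥ 2 be even, and θ ∈ (−1/2, 1/2]. Set k* := k/gcd(g, k). Then (1/k)·∑_{ℓ = 0}^{k−1} min_{z ∈ μ_g ∪ {0}} (1 − Re(z·e(θ − ℓ/k))) = 1 − (sin(π/g)/(k*·tan(π/(g·k*))))·F_{g·k*}(−g·k*·θ), where F_N(ω) := cos(2π{ω}/N) + tan(π/N)·sin(2π{ω}/N) and {ω} denotes the fractional part of ω. -/
open Complex Finset
open scoped Classical

/-- `F_N(ω) = cos(2π{ω}/N) + tan(π/N)·sin(2π{ω}/N)`. -/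
noncomputable def FN (N : ℕ) (ω : ℝ) : ℝ :=
  Real.cos (2 * Real.pi * Int.fract ω / N) +
    Real.tan (Real.pi / N) * Real.sin (2 * Real.pi * Int.fract ω / N)

noncomputable def cf (g : ℕ) (x : ℝ) : ℝ := Real.cos (2 * Real.pi / g * |x - round x|)

lemma cf_add_int (g : ℕ) (x : ℝ) (n : ℤ) : cf g (x + n) = cf g x := by
  unfold cf
  rw [round_add_intCast]
  push_cast
  ring_nf

lemma abs_sub_round_neg (x : ℝ) : |(-x) - round (-x)| = |x - round x| := by
  rw [abs_sub_round_eq_min, abs_sub_round_eq_min]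
  rcases eq_or_ne (Int.fract x) 0 with h | h
  · rw [Int.fract_neg_eq_zero.mpr h, h]
  · rw [Int.fract_neg h]
    simp [min_comm]

lemma cf_neg (g : ℕ) (x : ℝ) : cf g (-x) = cf g x := by
  unfold cf; rw [abs_sub_round_neg]

lemma sum_two_sin_cos (a s : ℝ) (H : ℕ) :
    ∑ m ∈ range H, 2 * Real.sin (s/2) * Real.cos (a + m * s)
      = Real.sin (a + H * s - s/2) - Real.sin (a - s/2) := by
  induction H with
  | zero => simp
  | succ n ih =>
    rw [Finset.sum_range_succ, ih]
    have : Real.sin (a + (n+1 : ℕ) * s - s/2) - Real.sin (a + n * s - s/2)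
        = 2 * Real.sin (s/2) * Real.cos (a + n * s) := by
      rw [Real.sin_sub_sin]
      push_cast
      ring_nf
    push_cast at this ⊢
    linarith [this]

lemma eC_re (x : ℝ) : (eC x).re = Real.cos (2 * Real.pi * x) := by
  unfold eC
  rw [show (2*Real.pi*Complex.I*x : ℂ) = ((2*Real.pi*x : ℝ) : ℂ) * Complex.I by push_cast; ring]
  exact Complex.exp_ofReal_mul_I_re _

lemma eC_abs (x : ℝ) : ‖eC x‖ = 1 := by
  unfold eC
  rw [show (2*Real.pi*Complex.I*x : ℂ) = ((2*Real.pi*x : ℝ) : ℂ) * Complex.I by push_cast; ring]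
  exact Complex.norm_exp_ofReal_mul_I _

lemma eC_add (x y : ℝ) : eC (x + y) = eC x * eC y := by
  unfold eC
  rw [← Complex.exp_add]
  push_cast
  ring_nf

lemma cos_bound (g : ℕ) (hg : 3 ≤ g) (m : ℤ) (u : ℝ) (hu : |u| ≤ 1/2) :
    Real.cos (2*Real.pi/g * (m + u)) ≤ Real.cos (2*Real.pi/g * |u|) := by
  have hgR : (0:ℝ) < g := by positivity
  have hπ := Real.pi_pos
  have hgz : (g:ℤ) ≠ 0 := by positivity
  set m' : ℤ := m % g with hm'
  set q : ℤ := m / g with hq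
  have hmeq : (g:ℤ) * q + m' = m := Int.mul_ediv_add_emod m g
  have h0 : 0 ≤ m' := Int.emod_nonneg m hgz
  have h1 : m' < g := Int.emod_lt_of_pos m (by positivity)
  have hsplit : (2*Real.pi/g) * (m + u) = (2*Real.pi/g) * (m' + u) + (q:ℝ) * (2*Real.pi) := by
    have hm : (m:ℝ) = (g:ℝ) * (q:ℝ) + (m':ℝ) := by exact_mod_cast congrArg (Int.cast : ℤ → ℝ) hmeq.symm
    rw [hm]; field_simp; ring
  rw [hsplit, Real.cos_add_int_mul_two_pi]
  have habs : 2*Real.pi/g * |u| = |2*Real.pi/g * u| := by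
    rw [abs_mul, _root_.abs_of_nonneg (by positivity : (0:ℝ) ≤ 2*Real.pi/g)]
  rcases eq_or_lt_of_le h0 with h | h
  · rw [← h, habs, Real.cos_abs]
    push_cast
    simp
  · have hm1 : (1:ℝ) ≤ (m' : ℝ) := by exact_mod_cast h
    have hm2 : (m' : ℝ) + 1 ≤ (g:ℝ) := by exact_mod_cast h1
    set t := 2*Real.pi/g * ((m':ℝ) + u) with ht
    obtain ⟨hu1, hu2⟩ := abs_le.mp hu
    have hgR3 : (3:ℝ) ≤ g := by exact_mod_cast hg
    have htlo : Real.pi / g ≤ t := by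
      rw [ht, div_mul_eq_mul_div, div_le_div_iff₀ hgR hgR]
      nlinarith [mul_nonneg (mul_nonneg hπ.le hgR.le) (show (0:ℝ) ≤ 2*((m':ℝ)+u)-1 by linarith)]
    have hthi : t ≤ 2*Real.pi - Real.pi/g := by
      rw [ht, div_mul_eq_mul_div, div_le_iff₀ hgR]
      have he : (2*Real.pi - Real.pi/g) * g = 2*Real.pi*g - Real.pi := by field_simp
      rw [he]
      nlinarith [mul_nonneg hπ.le (show (0:ℝ) ≤ 2*(g:ℝ) - 2*((m':ℝ)+u) - 1 by linarith)]
    have hπg_pos : 0 < Real.pi / g := by positivity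
    have hπg_le : Real.pi / g ≤ Real.pi := div_le_self hπ.le (by linarith)
    have key : Real.cos t ≤ Real.cos (Real.pi / g) := by
      rcases le_or_gt t Real.pi with hc | hc
      · exact Real.cos_le_cos_of_nonneg_of_le_pi hπg_pos.le hc htlo
      · rw [← Real.cos_two_pi_sub]
        exact Real.cos_le_cos_of_nonneg_of_le_pi hπg_pos.le (by linarith) (by linarith)
    refine key.trans ?_
    refine Real.cos_le_cos_of_nonneg_of_le_pi (by positivity) hπg_le ?_
    calc 2*Real.pi/g * |u| ≤ 2*Real.pi/g * (1/2) :=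
          mul_le_mul_of_nonneg_left hu (by positivity)
      _ = Real.pi / g := by ring

lemma eC_pow (x : ℝ) (n : ℕ) : eC x ^ n = eC (n * x) := by
  unfold eC
  rw [← Complex.exp_nat_mul]
  push_cast
  ring_nf

lemma eC_int (m : ℤ) : eC m = 1 := by
  unfold eC
  rw [show (2*Real.pi*Complex.I*(m:ℝ) : ℂ) = (m:ℤ) * (2*Real.pi*Complex.I) by push_cast; ring]
  exact Complex.exp_int_mul_two_pi_mul_I m

lemma cf_nonneg (g : ℕ) (hg : 3 ≤ g) (x : ℝ) : 0 ≤ cf g x := by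
  have hgR : (0:ℝ) < g := by positivity
  have hgR3 : (3:ℝ) ≤ g := by exact_mod_cast hg
  have hπ := Real.pi_pos
  apply Real.cos_nonneg_of_mem_Icc
  constructor
  · have : (0:ℝ) ≤ 2*Real.pi/g * |x - round x| := by positivity
    linarith
  · calc 2*Real.pi/g * |x - round x| ≤ 2*Real.pi/g * (1/2) :=
          mul_le_mul_of_nonneg_left (abs_sub_round x) (by positivity)
      _ = Real.pi/g := by ring
      _ ≤ Real.pi/2 := by
          apply div_le_div_of_nonneg_left hπ.le (by norm_num) (by linarith)

lemma inf_eq (g : ℕ) (hg : 3 ≤ g) (y : ℝ) :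
    sInf ((fun z : ℂ => 1 - (z * eC y).re) '' {z : ℂ | z ^ g = 1 ∨ z = 0}) = 1 - cf g (g * y) := by
  have hg0 : g ≠ 0 := by omega
  haveI : NeZero g := ⟨hg0⟩
  have hgR : (0:ℝ) < g := by positivity
  set r : ℤ := round ((g:ℝ) * y) with hr
  have habs2 : ∀ w : ℝ, Real.cos (2*Real.pi/g * w) = Real.cos (2*Real.pi/g * |w|) := by
    intro w
    rw [show 2*Real.pi/g * |w| = |2*Real.pi/g * w| by
      rw [abs_mul, _root_.abs_of_nonneg (by positivity : (0:ℝ) ≤ 2*Real.pi/g)], Real.cos_abs]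
  have hre : ∀ x : ℝ, ((eC x) * eC y).re = Real.cos (2*Real.pi*(x + y)) := by
    intro x
    rw [← eC_add, eC_re]
  have hkey : ((eC ((-r : ℤ) / (g:ℝ))) * eC y).re = cf g ((g:ℝ) * y) := by
    rw [hre]
    unfold cf
    rw [← hr]
    rw [show 2*Real.pi*((-r:ℤ)/(g:ℝ) + y) = 2*Real.pi/g * ((g:ℝ)*y - r) by push_cast; field_simp; ring]
    exact habs2 _
  have hmem : (1 - cf g ((g:ℝ) * y)) ∈
      ((fun z : ℂ => 1 - (z * eC y).re) '' {z : ℂ | z ^ g = 1 ∨ z = 0}) := by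
    refine ⟨eC ((-r : ℤ) / (g:ℝ)), Or.inl ?_, by show 1 - (eC ((-r : ℤ) / (g:ℝ)) * eC y).re = _; rw [hkey]⟩
    rw [eC_pow, show (g:ℝ) * ((-r:ℤ)/(g:ℝ)) = ((-r : ℤ) : ℝ) by field_simp]
    exact eC_int _
  have hbdd : BddBelow ((fun z : ℂ => 1 - (z * eC y).re) '' {z : ℂ | z ^ g = 1 ∨ z = 0}) := by
    refine ⟨0, ?_⟩
    rintro w ⟨z, hz, rfl⟩
    have hza : ‖z‖ ≤ 1 := by
      rcases hz with hz | rfl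
      · exact le_of_eq (Complex.norm_eq_one_of_pow_eq_one hz hg0)
      · simp
    have : (z * eC y).re ≤ 1 := by
      calc (z * eC y).re ≤ ‖z * eC y‖ := Complex.re_le_norm _
        _ = ‖z‖ * ‖eC y‖ := norm_mul _ _
        _ ≤ 1 := by rw [eC_abs]; simpa using hza
    simp only
    linarith
  refine le_antisymm (csInf_le hbdd hmem) (le_csInf ⟨_, hmem⟩ ?_)
  rintro w ⟨z, hz, rfl⟩
  rcases hz with hz | rfl
  · obtain ⟨j, hj, rfl⟩ := (Complex.isPrimitiveRoot_exp g hg0).eq_pow_of_pow_eq_one hz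
    have hζ : Complex.exp (2*Real.pi*Complex.I/(g:ℕ)) = eC (1/(g:ℝ)) := by
      unfold eC; push_cast; ring_nf
    rw [hζ, eC_pow]
    show 1 - cf g ((g:ℝ)*y) ≤ 1 - (eC ((j:ℝ)*(1/(g:ℝ))) * eC y).re
    have hcb := cos_bound g hg (j + r) ((g:ℝ)*y - r) (abs_sub_round _)
    have harg : 2*Real.pi*((j:ℝ)*(1/(g:ℝ)) + y) = 2*Real.pi/g * (((j:ℤ) + r : ℤ) + ((g:ℝ)*y - r)) := by
      push_cast; field_simp; ring
    rw [hre, harg]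
    unfold cf
    rw [← hr]
    linarith [hcb]
  · show 1 - cf g ((g:ℝ)*y) ≤ 1 - ((0:ℂ) * eC y).re
    simp only [zero_mul, Complex.zero_re, sub_zero]
    linarith [cf_nonneg g hg ((g:ℝ)*y)]

lemma sum_split (d N : ℕ) (f : ℕ → ℝ) :
    ∑ ℓ ∈ range (d*N), f ℓ = ∑ q ∈ range d, ∑ r ∈ range N, f (q*N + r) := by
  induction d with
  | zero => simp
  | succ n ih =>
    have : (n+1)*N = n*N + N := by ring
    rw [this, Finset.sum_range_add, ih, Finset.sum_range_succ]

lemma sum_reindex_mod (N : ℕ) (F : ℕ → ℝ) (e : ℕ → ℕ)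
    (hlt : ∀ m ∈ range N, e m ∈ range N)
    (hinj : ∀ m ∈ range N, ∀ m' ∈ range N, e m = e m' → m = m') :
    ∑ m ∈ range N, F (e m) = ∑ m ∈ range N, F m := by
  rw [← Finset.sum_image (s := range N) (g := e) (f := F) hinj]
  congr 1
  apply Finset.eq_of_subset_of_card_le
  · intro x hx
    obtain ⟨m, hm, rfl⟩ := Finset.mem_image.mp hx
    exact hlt m hm
  · rw [Finset.card_image_of_injOn hinj, Finset.card_range]

lemma sum_cf_eval (g H : ℕ) (hg : 3 ≤ g) (hH : 1 ≤ H) (b : ℝ) (hb0 : 0 ≤ b) (hb1 : b < 1) :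
    ∑ m ∈ range (2*H), cf g ((b + m)/(2*H : ℕ)) =
      Real.sin (Real.pi/g) * Real.cos (2*Real.pi/(g*(2*H : ℕ)) * b - Real.pi/(g*(2*H : ℕ)))
        / Real.sin (Real.pi/(g*(2*H : ℕ))) := by
  have hπ := Real.pi_pos
  have hgR : (0:ℝ) < g := by positivity
  have hgR3 : (3:ℝ) ≤ g := by exact_mod_cast hg
  have hHR : (1:ℝ) ≤ H := by exact_mod_cast hH
  have hNR : ((2*H : ℕ) : ℝ) = 2*(H:ℝ) := by push_cast; ring
  set c : ℝ := 2*Real.pi/(g*(2*H : ℕ)) with hc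
  set e : ℝ := Real.pi/(g*(2*H : ℕ)) with he
  have hce : c = 2*e := by rw [hc, he]; ring
  have hepos : 0 < e := by rw [he, hNR]; positivity
  have helt : e < Real.pi/2 := by
    rw [he, hNR]
    rw [div_lt_div_iff₀ (by positivity) (by norm_num)]
    have h6 : (6:ℝ) ≤ (g:ℝ)*(2*(H:ℝ)) := by nlinarith
    nlinarith
  have hsin : Real.sin e ≠ 0 :=
    ne_of_gt (Real.sin_pos_of_pos_of_lt_pi hepos (by linarith))
  have hcos : Real.cos e ≠ 0 := ne_of_gt (Real.cos_pos_of_mem_Ioo ⟨by linarith, helt⟩)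
  have hcH : (H:ℝ) * c = Real.pi/g := by
    rw [hc, hNR]; field_simp
  set u : ℝ := c * b with hu
  -- first half
  have h1 : ∀ m ∈ range H, cf g ((b + (m : ℕ))/(2*H : ℕ)) = Real.cos (u + m * c) := by
    intro m hm
    have hmH : (m:ℝ) ≤ (H:ℝ) - 1 := by
      have : m + 1 ≤ H := Finset.mem_range.mp hm
      exact_mod_cast by omega
    have hx0 : (0:ℝ) ≤ (b + m)/(2*H:ℕ) := by rw [hNR]; positivity
    have hx1 : (b + m)/(2*H:ℕ) < 1/2 := by
      rw [hNR, div_lt_div_iff₀ (by linarith) (by norm_num)]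
      linarith
    have hround : round ((b + m)/(2*H:ℕ)) = 0 :=
      round_eq_zero_iff.mpr ⟨by linarith, hx1⟩
    unfold cf
    rw [hround, Int.cast_zero, sub_zero, _root_.abs_of_nonneg hx0]
    congr 1
    rw [hu, hc, hNR]
    field_simp
  -- second half
  have h2 : ∀ m ∈ range H, cf g ((b + ((H + m : ℕ) : ℕ))/(2*H : ℕ))
      = Real.cos ((Real.pi/g - u) + m * (-c)) := by
    intro m hm
    have hmH : (m:ℝ) ≤ (H:ℝ) - 1 := by
      have : m + 1 ≤ H := Finset.mem_range.mp hm
      exact_mod_cast by omega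
    set x : ℝ := (b + ((H + m : ℕ) : ℕ))/(2*H : ℕ) with hx
    have hxc : x = (b + (H:ℝ) + m)/(2*(H:ℝ)) := by rw [hx, hNR]; push_cast; ring_nf
    have hx0 : (1:ℝ)/2 ≤ x := by
      rw [hxc, le_div_iff₀ (by linarith)]; linarith
    have hx1 : x < 1 := by
      rw [hxc, div_lt_one (by linarith)]; linarith
    have hround : round x = 1 := by
      have h3 : round (x - 1 + 1) = round (x - 1) + 1 := by
        exact_mod_cast round_add_intCast (x-1) 1
      have h0 : round (x - 1) = 0 := round_eq_zero_iff.mpr ⟨by linarith, by linarith⟩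
      have hx' : x - 1 + 1 = x := by ring
      rw [hx', h0] at h3
      omega
    unfold cf
    rw [hround, Int.cast_one]
    rw [show x - 1 = -(1 - x) by ring, abs_neg, _root_.abs_of_nonneg (by linarith)]
    congr 1
    rw [hu, hc, hxc, hNR]
    field_simp
    ring
  rw [hNR] at h1 h2 ⊢
  rw [show 2*H = H + H by ring, Finset.sum_range_add]
  rw [Finset.sum_congr rfl h1, Finset.sum_congr rfl h2]
  set SA : ℝ := ∑ m ∈ range H, Real.cos (u + m * c) with hSA
  set SB : ℝ := ∑ m ∈ range H, Real.cos ((Real.pi/g - u) + m * (-c)) with hSB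
  have hA := sum_two_sin_cos u c H
  rw [← Finset.mul_sum, ← hSA] at hA
  have hB := sum_two_sin_cos (Real.pi/g - u) (-c) H
  rw [← Finset.mul_sum, ← hSB] at hB
  rw [show (-c)/2 = -(c/2) by ring, Real.sin_neg] at hB
  rw [show c/2 = e by rw [hce]; ring] at hA hB
  have hHc : (H:ℝ) * (-c) = -(Real.pi/g) := by rw [← hcH]; ring
  rw [hHc] at hB
  rw [hcH] at hA
  set v : ℝ := u - e with hv
  rw [show u + Real.pi/g - e = v + Real.pi/g by rw [hv]; ring] at hA
  rw [show Real.pi/g - u + -(Real.pi/g) - -e = -v by rw [hv]; ring,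
      show Real.pi/g - u - -e = Real.pi/g - v by rw [hv]; ring] at hB
  rw [eq_div_iff hsin]
  rw [Real.sin_add] at hA
  rw [Real.sin_sub, Real.sin_neg] at hB
  linear_combination (hA - hB)/2

set_option maxHeartbeats 1000000 in
/-- **Lemma 6.2**: evaluation of the average of `min_{z ∈ μ_g ∪ {0}} (1 - Re z·e(θ - ℓ/k))`. -/
theorem statement15 (g k : ℕ) (hodd : Odd g) (hg : 3 ≤ g) (heven : Even k) (hk : 2 ≤ k)
    (θ : ℝ) (hθ1 : -(1 / 2) < θ) (hθ2 : θ ≤ 1 / 2)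
    (kstar : ℕ) (hkstar : kstar = k / Nat.gcd g k) :
    (1 / k : ℝ) * ∑ ℓ ∈ Finset.range k,
        sInf ((fun z : ℂ => 1 - (z * eC (θ - (ℓ : ℝ) / k)).re) ''
          {z : ℂ | z ^ g = 1 ∨ z = 0}) =
      1 - Real.sin (Real.pi / g) / (kstar * Real.tan (Real.pi / (g * kstar))) *
        FN (g * kstar) (-((g * kstar : ℕ) : ℝ) * θ) := by
  have hπ := Real.pi_pos
  set d := Nat.gcd g k with hd
  have hdpos : 0 < d := Nat.gcd_pos_of_pos_left k (by omega)
  have hdg : d ∣ g := Nat.gcd_dvd_left g k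
  have hdk : d ∣ k := Nat.gcd_dvd_right g k
  have hkdN : k = d * kstar := by rw [hkstar]; exact (Nat.mul_div_cancel' hdk).symm
  set gs := g / d with hgs
  have hgds : g = d * gs := (Nat.mul_div_cancel' hdg).symm
  have hco : Nat.Coprime gs kstar := by
    rw [hgs, hkstar]; exact Nat.coprime_div_gcd_div_gcd hdpos
  have hdodd : Odd d := by
    rcases Nat.even_or_odd d with hD | hD
    · exfalso
      obtain ⟨t, ht⟩ := dvd_trans hD.two_dvd hdg
      exact (Nat.not_even_iff_odd.mpr hodd) ⟨t, by omega⟩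
    · exact hD
  have hNpos : 0 < kstar := by
    rcases Nat.eq_zero_or_pos kstar with h0 | h
    · rw [h0, Nat.mul_zero] at hkdN; omega
    · exact h
  have hNeven : Even kstar := by
    rw [hkdN, Nat.even_mul] at heven
    rcases heven with h | h
    · exact absurd hdodd (Nat.not_odd_iff_even.mpr h)
    · exact h
  obtain ⟨H, hHH⟩ := hNeven
  have hN2H : kstar = 2 * H := by omega
  have hHpos : 1 ≤ H := by omega
  have hkpos : 0 < k := by omega
  have hkR : (0:ℝ) < k := by exact_mod_cast hkpos
  have hNR : (0:ℝ) < kstar := by exact_mod_cast hNpos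
  have hdR : (0:ℝ) < d := by exact_mod_cast hdpos
  have hgR : (0:ℝ) < g := by positivity
  have hgR3 : (3:ℝ) ≤ g := by exact_mod_cast hg
  have hgcast : (g:ℝ) = (d:ℝ) * (gs:ℝ) := by rw [hgds]; push_cast; ring
  have hkcast : (k:ℝ) = (d:ℝ) * (kstar:ℝ) := by rw [hkdN]; push_cast; ring
  -- Step 1 : evaluate each sInf
  have hstep1 : ∀ ℓ ∈ Finset.range k,
      sInf ((fun z : ℂ => 1 - (z * eC (θ - (ℓ : ℝ) / k)).re) '' {z : ℂ | z ^ g = 1 ∨ z = 0})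
        = 1 - cf g ((g:ℝ) * (θ - (ℓ:ℝ)/k)) := fun ℓ _ => inf_eq g hg _
  rw [Finset.sum_congr rfl hstep1, Finset.sum_sub_distrib, Finset.sum_const,
    Finset.card_range, nsmul_eq_mul, mul_one]
  set ω : ℝ := -(((g*kstar : ℕ)) : ℝ) * θ with hω
  set b := Int.fract ω with hb
  set M := ⌊ω⌋ with hM
  have hb0 : 0 ≤ b := Int.fract_nonneg ω
  have hb1 : b < 1 := Int.fract_lt_one ω
  have hωMb : (M:ℝ) + b = ω := by rw [hb, hM]; exact Int.floor_add_fract ω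
  set ψ : ℝ := (g:ℝ) * θ with hψ
  have hψω : (kstar:ℝ) * ψ = -ω := by rw [hψ, hω]; push_cast; ring
  clear_value b M
  -- Step 2 : collapse the ℓ-sum to a kstar-sum
  have hc1 : ∑ ℓ ∈ Finset.range k, cf g ((g:ℝ) * (θ - (ℓ:ℝ)/k))
      = (d:ℝ) * ∑ r ∈ Finset.range kstar, cf g (ψ - (gs:ℝ)*r/kstar) := by
    rw [hkdN, sum_split d kstar]
    have hinner : ∀ q ∈ Finset.range d, ∀ r ∈ Finset.range kstar,
        cf g ((g:ℝ) * (θ - ((q*kstar + r : ℕ):ℝ)/((d*kstar : ℕ):ℝ)))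
          = cf g (ψ - (gs:ℝ)*r/kstar) := by
      intro q _ r _
      have key : (g:ℝ) * (θ - ((q*kstar + r : ℕ):ℝ)/((d*kstar : ℕ):ℝ))
          = (ψ - (gs:ℝ)*r/kstar) + ((-(q*gs : ℕ) : ℤ):ℝ) := by
        rw [hψ, hgcast]; push_cast; field_simp; ring
      rw [key, cf_add_int]
    rw [Finset.sum_congr rfl (fun q hq => Finset.sum_congr rfl (hinner q hq)),
      Finset.sum_const, Finset.card_range, nsmul_eq_mul]
  have hc2 : ∑ r ∈ Finset.range kstar, cf g (ψ - (gs:ℝ)*r/kstar)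
      = ∑ m ∈ Finset.range kstar, cf g (ψ - (m:ℝ)/kstar) := by
    have he1 : ∀ r ∈ Finset.range kstar,
        cf g (ψ - (gs:ℝ)*r/kstar) = cf g (ψ - ((gs*r % kstar : ℕ):ℝ)/kstar) := by
      intro r _
      have hdm := Nat.div_add_mod (gs*r) kstar
      have hcast : (gs:ℝ)*(r:ℝ) = (kstar:ℝ)*((gs*r/kstar : ℕ):ℝ) + ((gs*r % kstar : ℕ):ℝ) := by
        exact_mod_cast congrArg (fun n : ℕ => (n:ℝ)) hdm.symm
      have key : ψ - (gs:ℝ)*r/kstar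
          = (ψ - ((gs*r % kstar : ℕ):ℝ)/kstar) + ((-(gs*r/kstar : ℕ) : ℤ):ℝ) := by
        have hIc : (((-(gs*r/kstar : ℕ) : ℤ)):ℝ) = -((gs*r/kstar : ℕ):ℝ) := by
          rw [Int.cast_neg, Int.cast_natCast]
        rw [hIc]
        field_simp
        linarith [hcast]
      rw [key, cf_add_int]
    rw [Finset.sum_congr rfl he1]
    refine sum_reindex_mod kstar (fun m => cf g (ψ - (m:ℝ)/kstar)) (fun r => gs*r % kstar)
      (fun m _ => Finset.mem_range.mpr (Nat.mod_lt _ hNpos)) ?_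
    intro m hm m' hm' hEq
    have hmod : gs*m ≡ gs*m' [MOD kstar] := hEq
    have := Nat.ModEq.cancel_left_of_coprime (Nat.Coprime.symm hco) hmod
    have h1 := Finset.mem_range.mp hm
    have h2 := Finset.mem_range.mp hm'
    unfold Nat.ModEq at this
    rwa [Nat.mod_eq_of_lt h1, Nat.mod_eq_of_lt h2] at this
  have hc3 : ∑ m ∈ Finset.range kstar, cf g (ψ - (m:ℝ)/kstar)
      = ∑ j ∈ Finset.range kstar, cf g ((b + (j:ℝ))/kstar) := by
    set M' : ℕ := (M % kstar).toNat with hM'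
    have hM'cast : ((M' : ℕ) : ℤ) = M % (kstar:ℤ) :=
      Int.toNat_of_nonneg (Int.emod_nonneg M (by exact_mod_cast hNpos.ne'))
    clear_value M'
    have he2 : ∀ m ∈ Finset.range kstar,
        cf g (ψ - (m:ℝ)/kstar) = cf g ((b + (((m + M') % kstar : ℕ):ℝ))/kstar) := by
      intro m _
      have hjcast : (((m + M') % kstar : ℕ) : ℤ) = ((m:ℤ) + (M':ℤ)) % (kstar:ℤ) := by
        push_cast
        rfl
      obtain ⟨z, hz⟩ : (kstar:ℤ) ∣ ((m:ℤ) + M - (((m + M') % kstar : ℕ):ℤ)) := by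
        have h1 : (((m + M') % kstar : ℕ):ℤ) = ((m:ℤ) + M) % kstar := by
          rw [hjcast, hM'cast, Int.add_emod, Int.emod_emod_of_dvd _ dvd_rfl, ← Int.add_emod]
        refine ⟨((m:ℤ) + M) / kstar, ?_⟩
        rw [h1, Int.emod_def]
        ring
      have hzR := congrArg (fun t : ℤ => (t:ℝ)) hz
      simp only [Int.cast_sub, Int.cast_add, Int.cast_mul, Int.cast_natCast] at hzR
      have k1 : ψ - (m:ℝ)/kstar = -((((M:ℝ) + b + m)/kstar)) := by
        have : (kstar:ℝ) * ψ = -((M:ℝ) + b) := by rw [hψω, ← hωMb]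
        field_simp
        linarith
      have k2 : ((M:ℝ) + b + m)/kstar = (b + (((m + M') % kstar : ℕ):ℝ))/kstar + (z:ℝ) := by
        field_simp
        linarith [hzR]
      rw [k1, cf_neg, k2, cf_add_int]
    rw [Finset.sum_congr rfl he2]
    refine sum_reindex_mod kstar (fun j => cf g ((b + (j:ℝ))/kstar)) (fun m => (m + M') % kstar)
      (fun m _ => Finset.mem_range.mpr (Nat.mod_lt _ hNpos)) ?_
    intro m hm m' hm' hEq
    have h1 := Finset.mem_range.mp hm
    have h2 := Finset.mem_range.mp hm'
    have hmod : m + M' ≡ m' + M' [MOD kstar] := hEq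
    have := Nat.ModEq.add_right_cancel' M' hmod
    unfold Nat.ModEq at this
    rwa [Nat.mod_eq_of_lt h1, Nat.mod_eq_of_lt h2] at this
  have hc4' : ∑ j ∈ Finset.range kstar, cf g ((b + (j:ℝ))/kstar)
      = Real.sin (Real.pi/g) * Real.cos (2*Real.pi/((g:ℝ)*(kstar:ℝ)) * b - Real.pi/((g:ℝ)*(kstar:ℝ)))
        / Real.sin (Real.pi/((g:ℝ)*(kstar:ℝ))) := by
    have := sum_cf_eval g H hg hHpos b hb0 hb1
    rw [hN2H]
    push_cast at this ⊢
    convert this using 3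
  rw [hc1, hc2, hc3, hc4']
  -- final algebra
  set E : ℝ := Real.pi/((g:ℝ)*(kstar:ℝ)) with hE
  have hE6 : (6:ℝ) ≤ (g:ℝ)*(kstar:ℝ) := by
    have : (2:ℝ) ≤ kstar := by
      have : 2 ≤ kstar := by omega
      exact_mod_cast this
    nlinarith
  have hEpos : 0 < E := by rw [hE]; positivity
  have hElt : E < Real.pi/2 := by
    rw [hE, div_lt_div_iff₀ (by positivity) (by norm_num)]
    nlinarith [hE6, hπ]
  have hsinE : Real.sin E ≠ 0 := ne_of_gt (Real.sin_pos_of_pos_of_lt_pi hEpos (by linarith))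
  have hcosE : Real.cos E ≠ 0 := ne_of_gt (Real.cos_pos_of_mem_Ioo ⟨by linarith, hElt⟩)
  have htanE : Real.tan E ≠ 0 := by
    rw [Real.tan_eq_sin_div_cos]; exact div_ne_zero hsinE hcosE
  have hFN : FN (g * kstar) ω
      = Real.cos (2*Real.pi/((g:ℝ)*(kstar:ℝ)) * b)
        + Real.tan E * Real.sin (2*Real.pi/((g:ℝ)*(kstar:ℝ)) * b) := by
    unfold FN
    rw [← hb]
    have hgk : ((g * kstar : ℕ) : ℝ) = (g:ℝ)*(kstar:ℝ) := by push_cast; ring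
    rw [hgk]
    rw [show 2*Real.pi*b/((g:ℝ)*(kstar:ℝ)) = 2*Real.pi/((g:ℝ)*(kstar:ℝ))*b by ring]
  rw [hFN]
  set S := Real.sin (Real.pi/(g:ℝ)) with hS
  set X := 2*Real.pi/((g:ℝ)*(kstar:ℝ)) * b with hX
  have core : S * Real.cos (X - E) / Real.sin E
      = S / Real.tan E * (Real.cos X + Real.tan E * Real.sin X) := by
    rw [Real.tan_eq_sin_div_cos, Real.cos_sub]
    field_simp
  have hfac : S / ((kstar:ℝ) * Real.tan E) * (Real.cos X + Real.tan E * Real.sin X)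
      = 1/(kstar:ℝ) * (S / Real.tan E * (Real.cos X + Real.tan E * Real.sin X)) := by
    ring
  rw [hfac, ← core, hkcast]
  have hdne : (d:ℝ) ≠ 0 := ne_of_gt hdR
  have hNne : (kstar:ℝ) ≠ 0 := ne_of_gt hNR
  set V := S * Real.cos (X - E) / Real.sin E with hV
  field_simp
end

section
/- Let g ≥ 3 be odd, k ≥ 2 be even, θ ∈ (−1/2, 1/2], and set k* := k/gcd(g, k). For ℓ ∈ ℤ let n_ℓ be the unique integer in (−g/2, g/2] such that θ − ℓ/k − n_ℓ/g lies in (−1/(2g), 1/(2g)] modulo 1, and define f(ℓ) := −(g·ℓ + k·n_ℓ). If ℓ₁ ≡ ℓ₂ (mod k*), then f(ℓ₁) ≡ f(ℓ₂) (mod gk). -/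
open Complex Finset
open scoped Classical

section NEll

/-- The defining property of `n_ℓ`: `n ℓ` is the integer in `(-g/2, g/2]` such that
`θ - ℓ/k - n ℓ / g` lies in `(-1/(2g), 1/(2g)]` modulo 1. -/
def NEllProp (g k : ℕ) (θ : ℝ) (n : ℤ → ℤ) : Prop :=
  ∀ ℓ : ℤ, (-(g : ℝ) / 2 < (n ℓ : ℝ) ∧ (n ℓ : ℝ) ≤ (g : ℝ) / 2) ∧
    ∃ N : ℤ, -(1 / (2 * (g : ℝ))) < θ - (ℓ : ℝ) / k - (n ℓ : ℝ) / g - N ∧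
      θ - (ℓ : ℝ) / k - (n ℓ : ℝ) / g - N ≤ 1 / (2 * (g : ℝ))

end NEll

/-- **Lemma 6.3**: `ℓ₁ ≡ ℓ₂ (mod k*)` implies `f(ℓ₁) ≡ f(ℓ₂) (mod gk)`. -/
theorem statement16 (g k : ℕ) (hodd : Odd g) (hg : 3 ≤ g) (heven : Even k) (hk : 2 ≤ k)
    (θ : ℝ) (hθ1 : -(1 / 2) < θ) (hθ2 : θ ≤ 1 / 2)
    (n : ℤ → ℤ) (hn : NEllProp g k θ n)
    (f : ℤ → ℤ) (hf : ∀ ℓ : ℤ, f ℓ = -((g : ℤ) * ℓ + (k : ℤ) * n ℓ))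
    (kstar : ℕ) (hkstar : kstar = k / Nat.gcd g k)
    (ℓ₁ ℓ₂ : ℤ) (h : ℓ₁ ≡ ℓ₂ [ZMOD (kstar : ℤ)]) :
    f ℓ₁ ≡ f ℓ₂ [ZMOD ((g : ℤ) * k)] := by
  set d := Nat.gcd g k with hd
  have hdk : d ∣ k := Nat.gcd_dvd_right g k
  obtain ⟨gq, hgq⟩ := Nat.gcd_dvd_left g k
  have hkd : kstar * d = k := by rw [hkstar, Nat.div_mul_cancel hdk]
  obtain ⟨t, ht⟩ := h.dvd
  obtain ⟨⟨_, _⟩, N₁, h1a, h1b⟩ := hn ℓ₁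
  obtain ⟨⟨_, _⟩, N₂, h2a, h2b⟩ := hn ℓ₂
  have hg0 : (0:ℝ) < g := by positivity
  have hk0 : (0:ℝ) < k := by positivity
  have hgne : (g:ℝ) ≠ 0 := ne_of_gt hg0
  have hkne : (k:ℝ) ≠ 0 := ne_of_gt hk0
  set M : ℤ := (gq : ℤ) * t + (n ℓ₂ - n ℓ₁) + g * (N₂ - N₁) with hM
  have htR : (ℓ₂ : ℝ) - ℓ₁ = (kstar : ℝ) * t := by exact_mod_cast ht
  have hgqR : (g : ℝ) = d * gq := by exact_mod_cast hgq
  have hkdR : (kstar : ℝ) * d = k := by exact_mod_cast hkd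
  have key : (g:ℝ) * ((ℓ₂:ℝ) - ℓ₁) = (gq:ℝ) * t * k := by
    linear_combination (g:ℝ) * htR + ((kstar:ℝ)*t) * hgqR + ((gq:ℝ)*t) * hkdR
  have hMR : (M : ℝ) = (g : ℝ) * ((θ - (ℓ₁ : ℝ) / k - (n ℓ₁ : ℝ) / g - N₁)
      - (θ - (ℓ₂ : ℝ) / k - (n ℓ₂ : ℝ) / g - N₂)) := by
    have hMc : (M : ℝ) = (gq : ℝ) * t + ((n ℓ₂ : ℝ) - n ℓ₁) + g * ((N₂ : ℝ) - N₁) := by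
      push_cast [hM]; ring
    rw [hMc]
    field_simp
    linear_combination -key
  have hM1 : (M : ℝ) < 1 := by
    have hx : (θ - (ℓ₁ : ℝ) / k - (n ℓ₁ : ℝ) / g - N₁)
      - (θ - (ℓ₂ : ℝ) / k - (n ℓ₂ : ℝ) / g - N₂) < 1 / g := by
      have : (1:ℝ)/(2*g) + 1/(2*g) = 1/g := by rw [← add_div, show ((1:ℝ)+1) = 2*1 by norm_num, mul_div_mul_left _ _ (two_ne_zero)]
      linarith
    calc (M:ℝ) = _ := hMR
    _ < g * (1/g) := mul_lt_mul_of_pos_left hx hg0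
    _ = 1 := by rw [mul_one_div, div_self hgne]
  have hM2 : (-1 : ℝ) < M := by
    have hx : -(1/(g:ℝ)) < (θ - (ℓ₁ : ℝ) / k - (n ℓ₁ : ℝ) / g - N₁)
      - (θ - (ℓ₂ : ℝ) / k - (n ℓ₂ : ℝ) / g - N₂) := by
      have : (1:ℝ)/(2*g) + 1/(2*g) = 1/g := by rw [← add_div, show ((1:ℝ)+1) = 2*1 by norm_num, mul_div_mul_left _ _ (two_ne_zero)]
      linarith
    calc (-1:ℝ) = g * (-(1/g)) := by rw [mul_neg, mul_one_div, div_self hgne]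
    _ < _ := mul_lt_mul_of_pos_left hx hg0
    _ = (M:ℝ) := hMR.symm
  have hM0 : M = 0 := by
    have a : (M:ℤ) < 1 := by exact_mod_cast hM1
    have b : (-1:ℤ) < M := by exact_mod_cast hM2
    omega
  have hM0eq : (gq:ℤ)*t + (n ℓ₂ - n ℓ₁) + (g:ℤ)*(N₂-N₁) = 0 := hM.symm.trans hM0
  have hgqZ : (g:ℤ) = (d:ℤ) * gq := by exact_mod_cast hgq
  have hkdZ : (kstar:ℤ) * d = k := by exact_mod_cast hkd
  exact Int.modEq_iff_dvd.mpr ⟨N₂ - N₁, by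
    linear_combination (hf ℓ₂) - (hf ℓ₁) - (g:ℤ)*ht - (k:ℤ)*hM0eq
      - ((kstar:ℤ)*t)*hgqZ - ((gq:ℤ)*t)*hkdZ⟩
end

section
/- Let g ≥ 3 be odd, k ≥ 2 be even, θ ∈ (−1/2, 1/2], and set k* := k/gcd(g, k). For ℓ ∈ ℤ let n_ℓ be the unique integer in (−g/2, g/2] such that θ − ℓ/k − n_ℓ/g lies in (−1/(2g), 1/(2g)] modulo 1, and define f(ℓ) := −(g·ℓ + k·n_ℓ). Then ℓ₁ ≡ ℓ₂ (mod k*) if and only if f(ℓ₁) ≡ f(ℓ₂) (mod k). -/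
open Complex Finset
open scoped Classical

/-- **Lemma 6.4**: `ℓ₁ ≡ ℓ₂ (mod k*)` if and only if `f(ℓ₁) ≡ f(ℓ₂) (mod k)`. -/
theorem statement17 (g k : ℕ) (hodd : Odd g) (hg : 3 ≤ g) (heven : Even k) (hk : 2 ≤ k)
    (θ : ℝ) (hθ1 : -(1 / 2) < θ) (hθ2 : θ ≤ 1 / 2)
    (n : ℤ → ℤ) (hn : NEllProp g k θ n)
    (f : ℤ → ℤ) (hf : ∀ ℓ : ℤ, f ℓ = -((g : ℤ) * ℓ + (k : ℤ) * n ℓ))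
    (kstar : ℕ) (hkstar : kstar = k / Nat.gcd g k)
    (ℓ₁ ℓ₂ : ℤ) :
    ℓ₁ ≡ ℓ₂ [ZMOD (kstar : ℤ)] ↔ f ℓ₁ ≡ f ℓ₂ [ZMOD (k : ℤ)] := by
  set d := Nat.gcd g k with hd
  have hdg : d ∣ g := Nat.gcd_dvd_left g k
  have hdk : d ∣ k := Nat.gcd_dvd_right g k
  have hdpos : 0 < d := Nat.gcd_pos_of_pos_right g (by omega)
  obtain ⟨g', hg'⟩ := hdg
  obtain ⟨k', hk'⟩ := hdk
  have hkstar' : kstar = k' := by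
    rw [hkstar, hk', Nat.mul_div_cancel_left _ hdpos]
  have hcop : Nat.Coprime g' k' := by
    have := Nat.coprime_div_gcd_div_gcd (m := g) (n := k) hdpos
    rwa [← hd, hg', hk', Nat.mul_div_cancel_left _ hdpos, Nat.mul_div_cancel_left _ hdpos] at this
  have key : ∀ m : ℤ, (k : ℤ) ∣ (g : ℤ) * m ↔ (kstar : ℤ) ∣ m := by
    intro m
    rw [hkstar']
    constructor
    · intro h
      have h' : (d : ℤ) * k' ∣ (d : ℤ) * ((g' : ℤ) * m) := by
        rw [← mul_assoc]
        simpa [hk', hg', mul_comm, mul_assoc] using h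
      have hdne : (d : ℤ) ≠ 0 := by exact_mod_cast hdpos.ne'
      have h'' : (k' : ℤ) ∣ (g' : ℤ) * m := (mul_dvd_mul_iff_left hdne).mp h'
      have hcopZ : IsCoprime (k' : ℤ) (g' : ℤ) := by
        rw [Int.isCoprime_iff_gcd_eq_one]
        exact_mod_cast hcop.symm
      exact hcopZ.dvd_of_dvd_mul_left h''
    · intro h
      obtain ⟨c, hc⟩ := h
      refine ⟨(g' : ℤ) * c, ?_⟩
      push_cast [hk', hg']
      rw [hc]; ring
  have h1 : ℓ₁ ≡ ℓ₂ [ZMOD (kstar : ℤ)] ↔ (kstar : ℤ) ∣ ℓ₂ - ℓ₁ := Int.modEq_iff_dvd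
  have h2 : f ℓ₁ ≡ f ℓ₂ [ZMOD (k : ℤ)] ↔ (k : ℤ) ∣ (g : ℤ) * (ℓ₂ - ℓ₁) := by
    rw [Int.modEq_iff_dvd]
    have : f ℓ₂ - f ℓ₁ = -((g : ℤ) * (ℓ₂ - ℓ₁)) + (k : ℤ) * (n ℓ₁ - n ℓ₂) := by
      rw [hf, hf]; ring
    rw [this]
    have hk2 : (k : ℤ) ∣ (k : ℤ) * (n ℓ₁ - n ℓ₂) := Dvd.intro _ rfl
    constructor
    · intro h
      have := dvd_sub h hk2
      simpa using this.neg_right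
    · intro h
      exact dvd_add h.neg_right hk2
  rw [h1, h2, key]
end

section
/- Let g ≥ 3 be odd, k ≥ 2 be even, θ ∈ (−1/2, 1/2], and set k* := k/gcd(g, k). For ℓ ∈ ℤ let n_ℓ be the unique integer in (−g/2, g/2] such that θ − ℓ/k − n_ℓ/g lies in (−1/(2g), 1/(2g)] modulo 1, and define f(ℓ) := −(g·ℓ + k·n_ℓ). Then the map ℓ ↦ f(ℓ), restricted to the integers in the interval [−k*/2 + k*θ, k*/2 + k*θ), is an injection into the set of integers in the interval (−k/2 − g·k·θ, k/2 − g·k·θ]. -/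
open Complex Finset
open scoped Classical

theorem statement18_aux1 (g k : ℕ) (hodd : Odd g) (hg : 3 ≤ g) (heven : Even k) (hk : 2 ≤ k)
    (θ : ℝ) (hθ1 : -(1 / 2) < θ) (hθ2 : θ ≤ 1 / 2)
    (n : ℤ → ℤ) (hn : NEllProp g k θ n)
    (f : ℤ → ℤ) (hf : ∀ ℓ : ℤ, f ℓ = -((g : ℤ) * ℓ + (k : ℤ) * n ℓ))
    (kstar : ℕ) (hkstar : kstar = k / Nat.gcd g k) :
    ∀ ℓ : ℤ, -(kstar : ℝ) / 2 + kstar * θ ≤ (ℓ : ℝ) → (ℓ : ℝ) < (kstar : ℝ) / 2 + kstar * θ →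
      (-(k : ℝ) / 2 - g * k * θ < (f ℓ : ℝ) ∧ (f ℓ : ℝ) ≤ (k : ℝ) / 2 - g * k * θ) := by
  have hd0 : 0 < Nat.gcd g k := Nat.gcd_pos_of_pos_left k (by omega)
  have hkk : k = Nat.gcd g k * kstar := by
    rw [hkstar]; exact (Nat.mul_div_cancel' (Nat.gcd_dvd_right g k)).symm
  have hks_le : kstar ≤ k := by
    calc kstar ≤ Nat.gcd g k * kstar := Nat.le_mul_of_pos_left kstar hd0
    _ = k := hkk.symm
  have hks1 : 1 ≤ kstar := by
    rcases Nat.eq_zero_or_pos kstar with h | h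
    · rw [h, mul_zero] at hkk; omega
    · exact h
  have hg0 : (0:ℝ) < g := by exact_mod_cast (by omega : 0 < g)
  have hk0 : (0:ℝ) < k := by exact_mod_cast (by omega : 0 < k)
  have hksR : (kstar:ℝ) ≤ k := by exact_mod_cast hks_le
  have h2gk : (0:ℝ) < 2 * (g:ℝ) * k := by positivity
  intro ℓ hl1 hl2
  obtain ⟨⟨hn1, hn2⟩, N, hA, hB⟩ := hn ℓ
  -- integer bounds on n ℓ using oddness of g
  have h2n : 2 * n ℓ ≤ (g:ℤ) := by
    have : 2 * (n ℓ : ℝ) ≤ (g:ℝ) := by linarith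
    exact_mod_cast this
  have h2n' : -(g:ℤ) < 2 * n ℓ := by
    have : -(g:ℝ) < 2 * (n ℓ : ℝ) := by linarith
    exact_mod_cast this
  obtain ⟨m, hm⟩ := hodd
  have hnub : 2 * n ℓ ≤ (g:ℤ) - 1 := by omega
  have hnlb : -(g:ℤ) + 1 ≤ 2 * n ℓ := by omega
  have hnubR : 2 * (n ℓ : ℝ) ≤ (g:ℝ) - 1 := by exact_mod_cast hnub
  have hnlbR : -(g:ℝ) + 1 ≤ 2 * (n ℓ : ℝ) := by exact_mod_cast hnlb
  -- bounds on 2kθ - 2ℓ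
  have hu2 : 2 * (k:ℝ) * θ - 2 * ℓ ≤ k := by
    nlinarith [mul_nonneg (sub_nonneg.2 hksR) (by linarith : (0:ℝ) ≤ 1 - 2 * θ)]
  have hu1 : -(k:ℝ) < 2 * (k:ℝ) * θ - 2 * ℓ := by
    nlinarith [mul_nonneg (sub_nonneg.2 hksR) (by linarith : (0:ℝ) ≤ 1 + 2 * θ)]
  -- clear denominators in hA, hB
  have hEq : (2 * (g:ℝ) * k) * (θ - (ℓ:ℝ)/k - (n ℓ : ℝ)/g - N)
      = 2*(g:ℝ)*k*θ - 2*(g:ℝ)*ℓ - 2*(k:ℝ)*(n ℓ) - 2*(g:ℝ)*k*N := by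
    field_simp
  have hT1 : -(k:ℝ) < 2*(g:ℝ)*k*θ - 2*(g:ℝ)*ℓ - 2*(k:ℝ)*(n ℓ) - 2*(g:ℝ)*k*N := by
    have h := mul_lt_mul_of_pos_left hA h2gk
    rw [hEq, show (2*(g:ℝ)*k) * (-(1/(2*(g:ℝ)))) = -(k:ℝ) by field_simp] at h
    exact h
  have hT2 : 2*(g:ℝ)*k*θ - 2*(g:ℝ)*ℓ - 2*(k:ℝ)*(n ℓ) - 2*(g:ℝ)*k*N ≤ k := by
    have h := mul_le_mul_of_nonneg_left hB h2gk.le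
    rw [hEq, show (2*(g:ℝ)*k) * (1/(2*(g:ℝ))) = (k:ℝ) by field_simp] at h
    exact h
  -- deduce N = 0
  have hN1 : (-1:ℝ) < (N:ℝ) := by
    have h : (2*(g:ℝ)*k) * (-1) < (2*(g:ℝ)*k) * N := by
      linarith [mul_lt_mul_of_pos_left hu1 hg0,
        mul_nonneg hk0.le (by linarith : (0:ℝ) ≤ (g:ℝ) - 1 - 2 * (n ℓ : ℝ))]
    exact (mul_lt_mul_iff_right₀ h2gk).mp h
  have hN2 : (N:ℝ) < 1 := by
    have h : (2*(g:ℝ)*k) * N < (2*(g:ℝ)*k) * 1 := by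
      linarith [mul_le_mul_of_nonneg_left hu2 hg0.le,
        mul_nonneg hk0.le (by linarith : (0:ℝ) ≤ (g:ℝ) - 1 + 2 * (n ℓ : ℝ))]
    exact (mul_lt_mul_iff_right₀ h2gk).mp h
  have hN0 : N = 0 := by
    have h1 : (-1:ℤ) < N := by exact_mod_cast hN1
    have h2 : N < 1 := by exact_mod_cast hN2
    omega
  subst hN0
  push_cast at hT1 hT2
  rw [hf ℓ]
  push_cast
  constructor <;> linarith


theorem statement18_aux2 (g k : ℕ) (hodd : Odd g) (hg : 3 ≤ g) (heven : Even k) (hk : 2 ≤ k)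
    (θ : ℝ) (hθ1 : -(1 / 2) < θ) (hθ2 : θ ≤ 1 / 2)
    (n : ℤ → ℤ) (hn : NEllProp g k θ n)
    (f : ℤ → ℤ) (hf : ∀ ℓ : ℤ, f ℓ = -((g : ℤ) * ℓ + (k : ℤ) * n ℓ))
    (kstar : ℕ) (hkstar : kstar = k / Nat.gcd g k) :
    ∀ ℓ₁ ℓ₂ : ℤ,
      -(kstar : ℝ) / 2 + kstar * θ ≤ (ℓ₁ : ℝ) → (ℓ₁ : ℝ) < (kstar : ℝ) / 2 + kstar * θ →
      -(kstar : ℝ) / 2 + kstar * θ ≤ (ℓ₂ : ℝ) → (ℓ₂ : ℝ) < (kstar : ℝ) / 2 + kstar * θ →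
      f ℓ₁ = f ℓ₂ → ℓ₁ = ℓ₂ := by
  have hd0 : 0 < Nat.gcd g k := Nat.gcd_pos_of_pos_left k (by omega)
  have hkk : k = Nat.gcd g k * kstar := by
    rw [hkstar]; exact (Nat.mul_div_cancel' (Nat.gcd_dvd_right g k)).symm
  have hks_le : kstar ≤ k := by
    calc kstar ≤ Nat.gcd g k * kstar := Nat.le_mul_of_pos_left kstar hd0
    _ = k := hkk.symm
  have hks1 : 1 ≤ kstar := by
    rcases Nat.eq_zero_or_pos kstar with h | h
    · rw [h, mul_zero] at hkk; omega
    · exact h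
  have hg0 : (0:ℝ) < g := by exact_mod_cast (by omega : 0 < g)
  have hk0 : (0:ℝ) < k := by exact_mod_cast (by omega : 0 < k)
  have hksR : (kstar:ℝ) ≤ k := by exact_mod_cast hks_le
  have h2gk : (0:ℝ) < 2 * (g:ℝ) * k := by positivity
  intro ℓ₁ ℓ₂ h11 h12 h21 h22 hfe
  have hgg : g = Nat.gcd g k * (g / Nat.gcd g k) :=
    (Nat.mul_div_cancel' (Nat.gcd_dvd_left g k)).symm
  have hco : Nat.Coprime (g / Nat.gcd g k) kstar := by
    rw [hkstar]; exact Nat.coprime_div_gcd_div_gcd hd0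
  -- the key equation
  have heq : (g:ℤ) * (ℓ₁ - ℓ₂) = (k:ℤ) * (n ℓ₂ - n ℓ₁) := by
    have h1 := hf ℓ₁
    have h2 := hf ℓ₂
    rw [h1, h2] at hfe
    linear_combination -hfe
  have heq2 : ((g / Nat.gcd g k : ℕ) : ℤ) * (ℓ₁ - ℓ₂) = (kstar:ℤ) * (n ℓ₂ - n ℓ₁) := by
    have hd0' : ((Nat.gcd g k : ℕ) : ℤ) ≠ 0 := by exact_mod_cast hd0.ne'
    apply mul_left_cancel₀ hd0'
    have hgE : (g:ℤ) = ((Nat.gcd g k : ℕ) : ℤ) * ((g / Nat.gcd g k : ℕ) : ℤ) := by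
      exact_mod_cast congrArg (Nat.cast : ℕ → ℤ) hgg
    have hkE : (k:ℤ) = ((Nat.gcd g k : ℕ) : ℤ) * (kstar : ℤ) := by
      exact_mod_cast congrArg (Nat.cast : ℕ → ℤ) hkk
    rw [← mul_assoc, ← hgE, ← mul_assoc, ← hkE]
    exact heq
  have hdvd : (kstar:ℤ) ∣ (ℓ₁ - ℓ₂) := by
    have h1 : (kstar:ℤ) ∣ ((g / Nat.gcd g k : ℕ) : ℤ) * (ℓ₁ - ℓ₂) :=
      ⟨n ℓ₂ - n ℓ₁, heq2⟩
    have hco' : IsCoprime ((kstar:ℤ)) ((g / Nat.gcd g k : ℕ) : ℤ) := by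
      rw [Int.isCoprime_iff_gcd_eq_one, Int.gcd_natCast_natCast]
      exact hco.symm
    exact hco'.dvd_of_dvd_mul_left h1
  have hb1 : ℓ₁ - ℓ₂ < (kstar:ℤ) := by
    have : (ℓ₁:ℝ) - ℓ₂ < (kstar:ℝ) := by linarith
    exact_mod_cast this
  have hb2 : ℓ₂ - ℓ₁ < (kstar:ℤ) := by
    have : (ℓ₂:ℝ) - ℓ₁ < (kstar:ℝ) := by linarith
    exact_mod_cast this
  obtain ⟨c, hc⟩ := hdvd
  have hksZ : (1:ℤ) ≤ (kstar:ℤ) := by exact_mod_cast hks1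
  rcases lt_trichotomy c 0 with h | h | h
  · exfalso
    have hc1 : c ≤ -1 := by omega
    nlinarith [mul_le_mul_of_nonneg_left hc1 (by linarith : (0:ℤ) ≤ (kstar:ℤ))]
  · rw [h, mul_zero] at hc; omega
  · exfalso
    have hc1 : 1 ≤ c := by omega
    nlinarith [mul_le_mul_of_nonneg_left hc1 (by linarith : (0:ℤ) ≤ (kstar:ℤ))]

/-- **Proposition 6.5**: `f` restricted to the integers in `[-k*/2 + k*θ, k*/2 + k*θ)` is an
injection into the integers in `(-k/2 - gkθ, k/2 - gkθ]`. -/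
theorem statement18 (g k : ℕ) (hodd : Odd g) (hg : 3 ≤ g) (heven : Even k) (hk : 2 ≤ k)
    (θ : ℝ) (hθ1 : -(1 / 2) < θ) (hθ2 : θ ≤ 1 / 2)
    (n : ℤ → ℤ) (hn : NEllProp g k θ n)
    (f : ℤ → ℤ) (hf : ∀ ℓ : ℤ, f ℓ = -((g : ℤ) * ℓ + (k : ℤ) * n ℓ))
    (kstar : ℕ) (hkstar : kstar = k / Nat.gcd g k) :
    (∀ ℓ : ℤ, -(kstar : ℝ) / 2 + kstar * θ ≤ (ℓ : ℝ) → (ℓ : ℝ) < (kstar : ℝ) / 2 + kstar * θ →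
      (-(k : ℝ) / 2 - g * k * θ < (f ℓ : ℝ) ∧ (f ℓ : ℝ) ≤ (k : ℝ) / 2 - g * k * θ)) ∧
    (∀ ℓ₁ ℓ₂ : ℤ,
      -(kstar : ℝ) / 2 + kstar * θ ≤ (ℓ₁ : ℝ) → (ℓ₁ : ℝ) < (kstar : ℝ) / 2 + kstar * θ →
      -(kstar : ℝ) / 2 + kstar * θ ≤ (ℓ₂ : ℝ) → (ℓ₂ : ℝ) < (kstar : ℝ) / 2 + kstar * θ →
      f ℓ₁ = f ℓ₂ → ℓ₁ = ℓ₂) := by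
  exact ⟨statement18_aux1 g k hodd hg heven hk θ hθ1 hθ2 n hn f hf kstar hkstar,
    statement18_aux2 g k hodd hg heven hk θ hθ1 hθ2 n hn f hf kstar hkstar⟩
end
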